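/- arXiv:2509.15691 — 2 statements merged into one kernel-verified Lean document; each statement's English description precedes it below -/
import Mathlib

section
/- Let n be a natural number and w_0, …, w_n real numbers, and let p(t) := Σ_{i=0}^{n} B^n_i(t) w_i be the corresponding polynomial of degree at most n. Then for every k with 0 ≤ k ≤ n, the k-th derivative of p at 1 equals (n!/(n-k)!) · Σ_{i=n-k}^{n} C(k,n-i) (-1)^{n-i} w_i. -/
/-- The `i`-th Bernstein basis polynomial of degree `n`:
`B^n_i(t) = C(n,i) * t^i * (1-t)^(n-i)`. -/
noncomputable def bern (n i : ℕ) (t : ℝ) : ℝ :=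
  (n.choose i : ℝ) * t ^ i * (1 - t) ^ (n - i)

open Polynomial

lemma iteratedDeriv_polyEval (Q : ℝ[X]) (k : ℕ) :
    iteratedDeriv k (fun t => Q.eval t) = fun t => ((derivative)^[k] Q).eval t := by
  induction k with
  | zero => simp
  | succ k ih =>
      rw [iteratedDeriv_succ, ih, Function.iterate_succ_apply']
      funext t
      exact Polynomial.deriv _

lemma taylor_one_bernstein (n i : ℕ) :
    Polynomial.taylor (1 : ℝ) (bernsteinPolynomial ℝ n i)
      = C ((n.choose i : ℝ) * (-1) ^ (n - i)) * ((X + 1) ^ i * X ^ (n - i)) := by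
  have h1 : Polynomial.taylor (1 : ℝ) (1 - X) = -X := by
    simp [Polynomial.taylor_apply]
  have h2 : Polynomial.taylor (1 : ℝ) X = X + 1 := by
    simp [Polynomial.taylor_apply]
  rw [bernsteinPolynomial]
  rw [Polynomial.taylor_mul, Polynomial.taylor_mul]
  have hC : Polynomial.taylor (1 : ℝ) ((n.choose i : ℕ) : ℝ[X]) = C (n.choose i : ℝ) := by
    rw [← Polynomial.C_eq_natCast, Polynomial.taylor_C]
  rw [hC]
  have hpow : ∀ m : ℕ, ∀ q : ℝ[X], Polynomial.taylor (1 : ℝ) (q ^ m)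
      = (Polynomial.taylor (1 : ℝ) q) ^ m := by
    intro m q
    induction m with
    | zero => simp
    | succ m ih => rw [pow_succ, Polynomial.taylor_mul, ih, pow_succ]
  rw [hpow, hpow, h1, h2, neg_pow]
  rw [map_mul]
  simp only [map_pow, map_neg, map_one]
  ring

lemma bern_iterate_deriv_at_one (n i k : ℕ) :
    ((derivative)^[k] (bernsteinPolynomial ℝ n i)).eval 1
      = (k.factorial : ℝ) * (n.choose i : ℝ) * (-1) ^ (n - i)
        * (if n - i ≤ k then (i.choose (k - (n - i)) : ℝ) else 0) := by
  have hd : (derivative)^[k] (bernsteinPolynomial ℝ n i)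
      = k.factorial • Polynomial.hasseDeriv k (bernsteinPolynomial ℝ n i) := by
    rw [← Polynomial.factorial_smul_hasseDeriv]
    rfl
  rw [hd]
  have hcoeff : (Polynomial.hasseDeriv k (bernsteinPolynomial ℝ n i)).eval 1
      = (Polynomial.taylor (1 : ℝ) (bernsteinPolynomial ℝ n i)).coeff k :=
    (Polynomial.taylor_coeff (1 : ℝ) _ k).symm
  rw [Polynomial.eval_smul, nsmul_eq_mul, hcoeff, taylor_one_bernstein]
  rw [Polynomial.coeff_C_mul, Polynomial.coeff_mul_X_pow']
  by_cases h : n - i ≤ k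
  · simp only [h, if_true]
    rw [Polynomial.coeff_X_add_one_pow]
    ring
  · simp only [h, if_false]
    ring

lemma key_identity (n i k : ℕ) (hk : k ≤ n) (hi : i ≤ n) (hik : n - k ≤ i) :
    (k.factorial : ℝ) * (n.choose i : ℝ) * (i.choose (k - (n - i)) : ℝ)
      = (n.factorial : ℝ) / ((n - k).factorial : ℝ) * (k.choose (n - i) : ℝ) := by
  have h1 : k - (n - i) ≤ i := by omega
  have h2 : n - i ≤ k := by omega
  have h3 : i - (k - (n - i)) = n - k := by omega
  have h4 : k - (n - i) = k - (n - i) := rfl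
  rw [Nat.cast_choose ℝ hi, Nat.cast_choose ℝ h1, Nat.cast_choose ℝ h2, h3]
  have hknz : ((k - (n - i)).factorial : ℝ) ≠ 0 := Nat.cast_ne_zero.2 (Nat.factorial_ne_zero _)
  have hnnz : ((n - i).factorial : ℝ) ≠ 0 := Nat.cast_ne_zero.2 (Nat.factorial_ne_zero _)
  have hinz : ((i).factorial : ℝ) ≠ 0 := Nat.cast_ne_zero.2 (Nat.factorial_ne_zero _)
  have hnknz : ((n - k).factorial : ℝ) ≠ 0 := Nat.cast_ne_zero.2 (Nat.factorial_ne_zero _)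
  field_simp

theorem bezier_iteratedDeriv_at_one
    (n : ℕ) (w : ℕ → ℝ) (p : ℝ → ℝ)
    (hp : ∀ t : ℝ, p t = ∑ i ∈ Finset.range (n + 1), bern n i t * w i) :
    ∀ k ≤ n,
      iteratedDeriv k p 1
        = ((Nat.factorial n : ℝ) / (Nat.factorial (n - k) : ℝ))
          * ∑ i ∈ Finset.Icc (n - k) n, (k.choose (n - i) : ℝ) * (-1) ^ (n - i) * w i := by
  intro k hk
  set P : ℝ[X] := ∑ i ∈ Finset.range (n + 1), C (w i) * bernsteinPolynomial ℝ n i with hP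
  have hpP : p = fun t => P.eval t := by
    funext t
    rw [hp t, hP, Polynomial.eval_finset_sum]
    refine Finset.sum_congr rfl fun i _ => ?_
    simp [bern, bernsteinPolynomial]
    ring
  have hiterP : ∀ m : ℕ, (derivative)^[m] P
      = ∑ i ∈ Finset.range (n + 1), C (w i) * (derivative)^[m] (bernsteinPolynomial ℝ n i) := by
    intro m
    rw [hP]
    induction m with
    | zero => simp
    | succ m ih =>
        rw [Function.iterate_succ_apply', ih, Polynomial.derivative_sum]
        refine Finset.sum_congr rfl fun i _ => ?_
        rw [Function.iterate_succ_apply', Polynomial.derivative_C_mul]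
  rw [hpP, iteratedDeriv_polyEval]
  simp only [hiterP k, Polynomial.eval_finset_sum]
  have heval : ∀ i ∈ Finset.range (n + 1),
      (C (w i) * (derivative)^[k] (bernsteinPolynomial ℝ n i)).eval 1
        = if n - k ≤ i then
            (n.factorial : ℝ) / ((n - k).factorial : ℝ)
              * ((k.choose (n - i) : ℝ) * (-1) ^ (n - i) * w i)
          else 0 := by
    intro i hi
    rw [Finset.mem_range] at hi
    have hi' : i ≤ n := by omega
    rw [Polynomial.eval_mul, Polynomial.eval_C, bern_iterate_deriv_at_one]
    by_cases h : n - k ≤ i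
    · have h2 : n - i ≤ k := by omega
      simp only [h2, if_true, h, if_true]
      rw [show (k.factorial : ℝ) * (n.choose i : ℝ) * (-1) ^ (n - i)
            * (i.choose (k - (n - i)) : ℝ)
          = (k.factorial : ℝ) * (n.choose i : ℝ) * (i.choose (k - (n - i)) : ℝ)
            * (-1) ^ (n - i) by ring, key_identity n i k hk hi' h]
      ring
    · have h2 : ¬ (n - i ≤ k) := by omega
      simp only [h2, if_false, h, if_false]
      ring
  rw [Finset.sum_congr rfl heval]
  rw [Finset.sum_ite, Finset.sum_const_zero, add_zero]
  rw [← Finset.mul_sum]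
  congr 1
  apply Finset.sum_congr
  · ext i
    simp only [Finset.mem_filter, Finset.mem_range, Finset.mem_Icc]
    omega
  · intro i _
    rfl
end

section
/- Let n be a natural number, c a real number, and ω_0, …, ω_n real numbers. Define ν_k := Σ_{i=0}^{k} ω_i B^k_i(c) for 0 ≤ k ≤ n. Then for every real number t, Σ_{k=0}^{n} B^n_k(t) ν_k = Σ_{i=0}^{n} ω_i B^n_i(c·t); that is, the subdivided weights ν_k reproduce the weight function of the rational Bézier curve on the left segment. -/
lemma bern_key (n i : ℕ) (hi : i ≤ n) (c t : ℝ) :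
    ∑ k ∈ Finset.Ico i (n + 1), bern n k t * bern k i c = bern n i (c * t) := by
  rw [Finset.sum_Ico_eq_sum_range]
  have hm : n + 1 - i = n - i + 1 := by omega
  rw [hm]
  have hsum : ∀ j ∈ Finset.range (n - i + 1),
      bern n (i + j) t * bern (i + j) i c
        = ((n.choose i : ℝ) * c ^ i * t ^ i) *
          ((t * (1 - c)) ^ j * (1 - t) ^ (n - i - j) * ((n - i).choose j : ℝ)) := by
    intro j hj
    simp only [Finset.mem_range] at hj
    have hj' : j ≤ n - i := by omega
    unfold bern
    have hch : (n.choose (i + j) : ℝ) * ((i + j).choose i : ℝ)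
        = (n.choose i : ℝ) * ((n - i).choose j : ℝ) := by
      have := Nat.choose_mul (n := n) (show i ≤ i + j by omega)
      have h2 : i + j - i = j := by omega
      rw [h2] at this
      exact_mod_cast congrArg (Nat.cast (R := ℝ)) this
    have h3 : i + j - i = j := by omega
    have h4 : n - (i + j) = n - i - j := by omega
    rw [h3, h4, pow_add, mul_pow]
    linear_combination (t ^ i * t ^ j * c ^ i * (1 - t) ^ (n - i - j) * (1 - c) ^ j) * hch
  rw [Finset.sum_congr rfl hsum, ← Finset.mul_sum]
  have hb : ∑ j ∈ Finset.range (n - i + 1),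
      (t * (1 - c)) ^ j * (1 - t) ^ (n - i - j) * ((n - i).choose j : ℝ)
        = (t * (1 - c) + (1 - t)) ^ (n - i) := (add_pow _ _ _).symm
  rw [hb]
  have : t * (1 - c) + (1 - t) = 1 - c * t := by ring
  rw [this]
  unfold bern
  ring

theorem rational_bezier_subdivided_weights
    (n : ℕ) (c : ℝ) (ω : ℕ → ℝ)
    (ν : ℕ → ℝ)
    (hν : ∀ k ≤ n, ν k = ∑ i ∈ Finset.range (k + 1), ω i * bern k i c) :
    ∀ t : ℝ,
      ∑ k ∈ Finset.range (n + 1), bern n k t * ν k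
        = ∑ i ∈ Finset.range (n + 1), ω i * bern n i (c * t) := by
  intro t
  have h1 : ∀ k ∈ Finset.range (n + 1),
      bern n k t * ν k = ∑ i ∈ Finset.range (k + 1), ω i * (bern n k t * bern k i c) := by
    intro k hk
    simp only [Finset.mem_range] at hk
    rw [hν k (by omega), Finset.mul_sum]
    exact Finset.sum_congr rfl fun i _ => by ring
  rw [Finset.sum_congr rfl h1]
  have h2 : ∀ k, Finset.range (k + 1) = Finset.Ico 0 (k + 1) := fun k => by
    rw [Finset.range_eq_Ico]
  simp only [h2]
  rw [← Finset.sum_Ico_Ico_comm 0 (n + 1) (fun i k => ω i * (bern n k t * bern k i c))]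
  refine Finset.sum_congr rfl fun i hi => ?_
  simp only [Finset.mem_Ico] at hi
  rw [← Finset.mul_sum, bern_key n i (by omega) c t]
end
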